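/- Let u > 0, γ ∈ [0,1), and T ≥ 0, and define M(z) = u(1−γ)·e^{−zT} / ( z + u(1 − γ·e^{−zT}) ) on a neighborhood of z = 0. Then M is twice differentiable at 0 with −M′(0) = (1 + uT)/(u(1−γ)) and M″(0) = T² + 2T/(u(1−γ)) + 3γT²/(1−γ) + 2(1 + uγT)²/(u(1−γ))². Consequently, the squared coefficient of variation M″(0)/(M′(0))² − 1 equals γ + (1−γ)/(1 + uT)². -/

import Mathlib

/-- The service-time MGF `M(z) = u(1−γ)e^{−zT}/(z + u(1 − γe^{−zT}))`
is twice differentiable at `0` with `−M′(0) = (1+uT)/(u(1−γ))` and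
`M″(0) = T² + 2T/(u(1−γ)) + 3γT²/(1−γ) + 2(1+uγT)²/(u(1−γ))²`; consequently the
squared coefficient of variation `M″(0)/M′(0)² − 1` equals `γ + (1−γ)/(1+uT)²`. -/
theorem stmt19 (u γ T : ℝ) (hu : 0 < u) (hγ : γ ∈ Set.Ico (0 : ℝ) 1) (hT : 0 ≤ T)
    (M : ℝ → ℝ)
    (hM : ∀ z : ℝ, M z =
      u * (1 - γ) * Real.exp (-z * T) / (z + u * (1 - γ * Real.exp (-z * T)))) :
    DifferentiableAt ℝ M 0 ∧ DifferentiableAt ℝ (deriv M) 0 ∧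
    (-(deriv M 0) = (1 + u * T) / (u * (1 - γ))) ∧
    (deriv (deriv M) 0 =
      T ^ 2 + 2 * T / (u * (1 - γ)) + 3 * γ * T ^ 2 / (1 - γ) +
        2 * (1 + u * γ * T) ^ 2 / (u * (1 - γ)) ^ 2) ∧
    (deriv (deriv M) 0 / (deriv M 0) ^ 2 - 1 = γ + (1 - γ) / (1 + u * T) ^ 2) := by
  obtain ⟨hγ0, hγ1⟩ := hγ
  have h1γ : (0:ℝ) < 1 - γ := by linarith
  have ha : (0:ℝ) < u * (1 - γ) := by positivity
  have ha' : u * (1 - γ) ≠ 0 := ne_of_gt ha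
  have h1γ' : (1:ℝ) - γ ≠ 0 := ne_of_gt h1γ
  have hu' : u ≠ 0 := ne_of_gt hu
  have huT : (0:ℝ) < 1 + u * T := by nlinarith
  have huT' : (1:ℝ) + u * T ≠ 0 := ne_of_gt huT
  have hMeq : M = fun z => u * (1 - γ) * Real.exp (-z * T) /
      (z + u * (1 - γ * Real.exp (-z * T))) := funext hM
  subst hMeq
  -- basic derivatives
  have hexp : ∀ z : ℝ, HasDerivAt (fun z : ℝ => Real.exp (-z * T))
      (Real.exp (-z * T) * -T) z := by
    intro z
    have h1 : HasDerivAt (fun z : ℝ => -z * T) (-T) z := by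
      simpa using ((hasDerivAt_id z).neg.mul_const T)
    exact h1.exp
  have hF : ∀ z : ℝ, HasDerivAt (fun z : ℝ => u * (1 - γ) * Real.exp (-z * T))
      (u * (1 - γ) * (Real.exp (-z * T) * -T)) z := fun z => (hexp z).const_mul _
  have hG : ∀ z : ℝ, HasDerivAt (fun z : ℝ => z + u * (1 - γ * Real.exp (-z * T)))
      (1 + u * (γ * T * Real.exp (-z * T))) z := by
    intro z
    have h := (hasDerivAt_id z).add ((((hexp z).const_mul γ).const_sub 1).const_mul u)
    exact h.congr_deriv (by ring)
  -- G is nonzero near 0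
  have hG00 : (0:ℝ) + u * (1 - γ * Real.exp (-(0:ℝ) * T)) = u * (1 - γ) := by
    simp
  have hG0ne : (0:ℝ) + u * (1 - γ * Real.exp (-(0:ℝ) * T)) ≠ 0 := by
    rw [hG00]; exact ha'
  have hGc : ContinuousAt (fun z : ℝ => z + u * (1 - γ * Real.exp (-z * T))) 0 := by
    fun_prop
  have hGne : ∀ᶠ z in nhds (0:ℝ), (z + u * (1 - γ * Real.exp (-z * T))) ≠ 0 :=
    hGc.eventually_ne hG0ne
  -- first derivative of M at 0
  have hM0 : HasDerivAt (fun z => u * (1 - γ) * Real.exp (-z * T) /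
      (z + u * (1 - γ * Real.exp (-z * T)))) (-((1 + u * T) / (u * (1 - γ)))) 0 := by
    have h := (hF 0).div (hG 0) hG0ne
    refine h.congr_deriv ?_
    rw [hG00]
    simp only [neg_zero, zero_mul, Real.exp_zero, mul_one]
    field_simp
    ring
  -- the explicit first-derivative function H
  set H : ℝ → ℝ := fun z =>
    (u * (1 - γ) * (Real.exp (-z * T) * -T) * (z + u * (1 - γ * Real.exp (-z * T))) -
      u * (1 - γ) * Real.exp (-z * T) * (1 + u * (γ * T * Real.exp (-z * T)))) /
      (z + u * (1 - γ * Real.exp (-z * T))) ^ 2 with hHdef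
  have hdMeq : deriv (fun z => u * (1 - γ) * Real.exp (-z * T) /
      (z + u * (1 - γ * Real.exp (-z * T)))) =ᶠ[nhds (0:ℝ)] H := by
    filter_upwards [hGne] with z hz
    rw [((hF z).fun_div (hG z) hz).deriv, hHdef]
  -- H is differentiable at 0 with the claimed derivative
  have hH0 : HasDerivAt H (T ^ 2 + 2 * T / (u * (1 - γ)) + 3 * γ * T ^ 2 / (1 - γ) +
      2 * (1 + u * γ * T) ^ 2 / (u * (1 - γ)) ^ 2) 0 := by
    have hnum0 : HasDerivAt (fun z : ℝ =>
        u * (1 - γ) * (Real.exp (-z * T) * -T) * (z + u * (1 - γ * Real.exp (-z * T))) -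
          u * (1 - γ) * Real.exp (-z * T) * (1 + u * (γ * T * Real.exp (-z * T))))
        ((u * (1 - γ)) * ((Real.exp (-(0:ℝ) * T) * -T) * -T) *
            ((0:ℝ) + u * (1 - γ * Real.exp (-(0:ℝ) * T))) +
          u * (1 - γ) * (Real.exp (-(0:ℝ) * T) * -T) *
            (1 + u * (γ * T * Real.exp (-(0:ℝ) * T))) -
          (u * (1 - γ) * (Real.exp (-(0:ℝ) * T) * -T) *
            (1 + u * (γ * T * Real.exp (-(0:ℝ) * T))) +
          u * (1 - γ) * Real.exp (-(0:ℝ) * T) *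
            (u * (γ * T * (Real.exp (-(0:ℝ) * T) * -T))))) 0 := by
      have hFp : HasDerivAt (fun z : ℝ => u * (1 - γ) * (Real.exp (-z * T) * -T))
          ((u * (1 - γ)) * ((Real.exp (-(0:ℝ) * T) * -T) * -T)) 0 := by
        have := ((hexp 0).mul_const (-T)).const_mul (u * (1 - γ))
        exact this.congr_deriv (by ring)
      have hB : HasDerivAt (fun z : ℝ => 1 + u * (γ * T * Real.exp (-z * T)))
          (u * (γ * T * (Real.exp (-(0:ℝ) * T) * -T))) 0 := by
        have := ((((hexp 0).const_mul (γ * T)).const_mul u).const_add 1)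
        exact this.congr_deriv (by ring)
      exact (hFp.mul (hG 0)).sub ((hF 0).mul hB)
    have hden : HasDerivAt (fun z : ℝ => (z + u * (1 - γ * Real.exp (-z * T))) ^ 2)
        ((2:ℕ) * ((0:ℝ) + u * (1 - γ * Real.exp (-(0:ℝ) * T))) ^ 1 *
          (1 + u * (γ * T * Real.exp (-(0:ℝ) * T)))) 0 := by
      simpa using (hG 0).fun_pow 2
    have hden0 : ((0:ℝ) + u * (1 - γ * Real.exp (-(0:ℝ) * T))) ^ 2 ≠ 0 :=
      pow_ne_zero _ hG0ne
    have h := hnum0.div hden hden0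
    rw [hHdef]
    refine h.congr_deriv ?_
    simp only [neg_zero, zero_mul, Real.exp_zero, mul_one, zero_add, Nat.cast_ofNat,
      pow_one]
    field_simp
    ring
  have hd2 : deriv (deriv (fun z => u * (1 - γ) * Real.exp (-z * T) /
      (z + u * (1 - γ * Real.exp (-z * T))))) 0 =
      T ^ 2 + 2 * T / (u * (1 - γ)) + 3 * γ * T ^ 2 / (1 - γ) +
        2 * (1 + u * γ * T) ^ 2 / (u * (1 - γ)) ^ 2 := by
    rw [hdMeq.deriv_eq, hH0.deriv]
  refine ⟨hM0.differentiableAt, hdMeq.differentiableAt_iff.mpr hH0.differentiableAt,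
    ?_, hd2, ?_⟩
  · rw [hM0.deriv]; ring
  · rw [hd2, hM0.deriv]
    have hne : (-((1 + u * T) / (u * (1 - γ)))) ^ 2 = (1 + u * T) ^ 2 / (u * (1 - γ)) ^ 2 := by
      rw [neg_sq, div_pow]
    rw [hne, div_div_eq_mul_div]
    rw [div_sub_one (pow_ne_zero 2 huT')]
    rw [div_eq_iff (pow_ne_zero 2 huT')]
    field_simp
    ring
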